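/- For any symbol Q(λ) with coefficients in R one has the identity Q(h∂)* · e^{−y∂} = ( Q^y(h∂) · e^{y∂} )* in Ψ(R)[[y]] (pseudo-differential operators with formal power series in y as coefficients), where e^{±y∂} = Σ_{k≥0} (±y)ᵏ ∂ᵏ / k! and the adjoint on the right-hand side is applied coefficientwise in y. -/

import Mathlib

open scoped BigOperators

/-- Generalized binomial coefficient `C(k,l) = k(k-1)⋯(k-l+1)/l!` for `k : ℤ`. -/
def gbinom (k : ℤ) (l : ℕ) : ℚ :=
  (∏ i ∈ Finset.range l, ((k : ℚ) - i)) / (Nat.factorial l)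

/-- Pseudo-differential operators (and symbols): coefficient functions `ℤ → R`
with support bounded above.  The parameter `d` (the derivation) determines the product. -/
structure PDO (R : Type) [CommRing R] [Algebra ℚ R] (d : R →+ R) where
  coeff : ℤ → R
  bdd : ∃ N : ℤ, ∀ n : ℤ, N < n → coeff n = 0

namespace PDO

variable {R : Type} [CommRing R] [Algebra ℚ R] {d : R →+ R}

theorem ext' {A B : PDO R d} (h : A.coeff = B.coeff) : A = B := by
  cases A; cases B; cases h; rfl

set_option linter.unusedSectionVars false in
theorem iterD_zero (d : R →+ R) (j : ℕ) : d^[j] (0 : R) = 0 := by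
  induction j with
  | zero => rfl
  | succ j ih => rw [Function.iterate_succ_apply', ih, map_zero]

instance : Zero (PDO R d) := ⟨⟨fun _ => 0, ⟨0, fun _ _ => rfl⟩⟩⟩

instance : One (PDO R d) :=
  ⟨⟨fun n => if n = 0 then 1 else 0, ⟨0, fun n hn => if_neg (by omega)⟩⟩⟩

instance : Add (PDO R d) :=
  ⟨fun A B => ⟨fun n => A.coeff n + B.coeff n, by
    obtain ⟨N, hN⟩ := A.bdd
    obtain ⟨M, hM⟩ := B.bdd
    exact ⟨max N M, fun n hn => by
      show A.coeff n + B.coeff n = 0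
      rw [hN n (lt_of_le_of_lt (le_max_left N M) hn),
        hM n (lt_of_le_of_lt (le_max_right N M) hn), add_zero]⟩⟩⟩

instance : Neg (PDO R d) :=
  ⟨fun A => ⟨fun n => -A.coeff n, by
    obtain ⟨N, hN⟩ := A.bdd
    exact ⟨N, fun n hn => by show -A.coeff n = 0; rw [hN n hn, neg_zero]⟩⟩⟩

instance : SMul ℚ (PDO R d) :=
  ⟨fun c A => ⟨fun n => c • A.coeff n, by
    obtain ⟨N, hN⟩ := A.bdd
    exact ⟨N, fun n hn => by show c • A.coeff n = 0; rw [hN n hn, smul_zero]⟩⟩⟩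

instance : AddCommGroup (PDO R d) where
  add := (· + ·)
  zero := 0
  neg := Neg.neg
  add_assoc A B C := ext' (funext fun n => add_assoc (A.coeff n) (B.coeff n) (C.coeff n))
  zero_add A := ext' (funext fun n => zero_add (A.coeff n))
  add_zero A := ext' (funext fun n => add_zero (A.coeff n))
  add_comm A B := ext' (funext fun n => add_comm (A.coeff n) (B.coeff n))
  neg_add_cancel A := ext' (funext fun n => neg_add_cancel (A.coeff n))
  nsmul := nsmulRec
  zsmul := zsmulRec

/-- The product of pseudo-differential operators, determined by the commutation rule
`∂^k · f = Σ_{l ≥ 0} C(k,l) (∂^l f) ∂^(k-l)`. -/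
noncomputable instance : Mul (PDO R d) :=
  ⟨fun A B =>
    ⟨fun n => ∑ᶠ (k : ℤ) (m : ℤ),
        if _ : 0 ≤ k + m - n then
          A.coeff k * (gbinom k (k + m - n).toNat • (d^[(k + m - n).toNat] (B.coeff m)))
        else 0, by
      obtain ⟨N, hN⟩ := A.bdd
      obtain ⟨M, hM⟩ := B.bdd
      refine ⟨N + M, fun n hn => ?_⟩
      have hz : ∀ k m : ℤ,
          (if _ : 0 ≤ k + m - n then
            A.coeff k * (gbinom k (k + m - n).toNat • (d^[(k + m - n).toNat] (B.coeff m)))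
          else 0) = 0 := by
        intro k m
        by_cases hl : 0 ≤ k + m - n
        · rw [dif_pos hl]
          by_cases hk : N < k
          · rw [hN k hk, zero_mul]
          · rw [hM m (by omega), iterD_zero, smul_zero, mul_zero]
        · rw [dif_neg hl]
      simp only [hz, finsum_zero]⟩⟩

noncomputable def npow (A : PDO R d) : ℕ → PDO R d
  | 0 => 1
  | n + 1 => npow A n * A

noncomputable instance : Pow (PDO R d) ℕ := ⟨fun A n => A.npow n⟩

/-- The monomial `r ∂^k`. -/
def mono (r : R) (k : ℤ) : PDO R d :=
  ⟨fun n => if n = k then r else 0, ⟨k, fun n hn => if_neg (by omega)⟩⟩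

/-- The constant (order-zero) operator `r`. -/
def const (r : R) : PDO R d := mono r 0

/-- The operator `∂`. -/
def del : PDO R d := mono (1 : R) 1

/-- The operator `h∂`. -/
def hdel (h : Rˣ) : PDO R d := mono (h : R) 1

/-- The Lax operator `L = h²∂² + 2u`. -/
def Lop (h : Rˣ) (u : R) : PDO R d :=
  ⟨fun n => if n = 2 then (h : R) ^ 2 else if n = 0 then 2 * u else 0,
   ⟨2, fun n hn => by
      show (if n = 2 then (h : R) ^ 2 else if n = 0 then 2 * u else 0) = 0
      rw [if_neg (by omega), if_neg (by omega)]⟩⟩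

/-- The differential part `A₊`. -/
def pos (A : PDO R d) : PDO R d :=
  ⟨fun n => if 0 ≤ n then A.coeff n else 0, by
    obtain ⟨N, hN⟩ := A.bdd
    refine ⟨N, fun n hn => ?_⟩
    show (if 0 ≤ n then A.coeff n else 0) = 0
    by_cases h0 : (0 : ℤ) ≤ n
    · rw [if_pos h0]; exact hN n hn
    · rw [if_neg h0]⟩

/-- The integral part `A₋ = A − A₊`. -/
def negp (A : PDO R d) : PDO R d :=
  ⟨fun n => if n < 0 then A.coeff n else 0, ⟨0, fun n hn => if_neg (by omega)⟩⟩

/-- The residue `Res_∂ A = a₋₁`. -/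
def res (A : PDO R d) : R := A.coeff (-1)

/-- The formal adjoint, determined by `(f ∂^k)* = (−∂)^k · f`. -/
noncomputable def adj (A : PDO R d) : PDO R d :=
  ⟨fun n => ∑ᶠ k : ℤ,
      if _ : 0 ≤ k - n then
        (((-1 : ℚ) ^ k) * gbinom k (k - n).toNat) • (d^[(k - n).toNat] (A.coeff k))
      else 0, by
    obtain ⟨N, hN⟩ := A.bdd
    refine ⟨N, fun n hn => ?_⟩
    have hz : ∀ k : ℤ, (if _ : 0 ≤ k - n then
        (((-1 : ℚ) ^ k) * gbinom k (k - n).toNat) • (d^[(k - n).toNat] (A.coeff k))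
      else 0) = 0 := by
      intro k
      by_cases hl : 0 ≤ k - n
      · rw [dif_pos hl, hN k (by omega), iterD_zero, smul_zero]
      · rw [dif_neg hl]
    simp only [hz, finsum_zero]⟩

/-- The operator `P(h∂) = Σ pₙ hⁿ ∂ⁿ` associated to the symbol `P(λ) = Σ pₙ λⁿ`. -/
noncomputable def ofSymbol (h : Rˣ) (A : PDO R d) : PDO R d :=
  ⟨fun n => A.coeff n * ((h ^ n : Rˣ) : R), by
    obtain ⟨N, hN⟩ := A.bdd
    exact ⟨N, fun n hn => by show A.coeff n * ((h ^ n : Rˣ) : R) = 0; rw [hN n hn, zero_mul]⟩⟩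

/-- Apply `d^[i]` to each coefficient. -/
def mapD (i : ℕ) (A : PDO R d) : PDO R d :=
  ⟨fun n => d^[i] (A.coeff n), by
    obtain ⟨N, hN⟩ := A.bdd
    exact ⟨N, fun n hn => by show d^[i] (A.coeff n) = 0; rw [hN n hn, iterD_zero]⟩⟩

/-- The coefficientwise extension of an additive map `D : R →+ R`. -/
def mapHom (D : R →+ R) (A : PDO R d) : PDO R d :=
  ⟨fun n => D (A.coeff n), by
    obtain ⟨N, hN⟩ := A.bdd
    exact ⟨N, fun n hn => by show D (A.coeff n) = 0; rw [hN n hn, map_zero]⟩⟩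

/-- The commutator `[A, B] = AB − BA`. -/
noncomputable def comm (A B : PDO R d) : PDO R d := A * B - B * A

end PDO

/-- The Leibniz rule: `d` is a derivation. -/
def Leibniz {R : Type} [CommRing R] [Algebra ℚ R] (d : R →+ R) : Prop :=
  ∀ a b : R, d (a * b) = a * d b + b * d a

/-- `aₙ = 1/(2n+1)!!`. -/
def kdvA (n : ℕ) : ℚ := 1 / (Nat.doubleFactorial (2 * n + 1))

/-- `bₙ = (2n−1)!!` (with `b₀ = (−1)!! = 1`). -/
def kdvB (n : ℕ) : ℚ := (Nat.doubleFactorial (2 * n - 1) : ℕ)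



section AuxComb

lemma gbinom_zero (m : ℤ) : gbinom m 0 = 1 := by simp [gbinom]

lemma gbinom_pascal (m : ℤ) (L : ℕ) : gbinom (m+1) (L+1) = gbinom m (L+1) + gbinom m L := by
  unfold gbinom
  rw [Finset.prod_range_succ' (fun i => ((m+1 : ℤ) : ℚ) - i), Finset.prod_range_succ]
  have hL : ((Nat.factorial L : ℚ)) ≠ 0 := by exact_mod_cast (Nat.factorial_pos L).ne'
  have hL1 : ((Nat.factorial (L+1) : ℚ)) ≠ 0 := by exact_mod_cast (Nat.factorial_pos (L+1)).ne'
  have hprod : ∏ i ∈ Finset.range L, (((m+1 : ℤ) : ℚ) - ((i:ℕ)+1 : ℕ)) = ∏ i ∈ Finset.range L, ((m:ℚ) - i) := by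
    apply Finset.prod_congr rfl; intro i _; push_cast; ring
  rw [hprod, Nat.factorial_succ]
  push_cast
  field_simp
  ring

lemma key (k : ℕ) : ∀ (L : ℕ) (m : ℤ),
    ∑ i ∈ Finset.range (k+1), ((-1:ℚ)^i * (k.choose i) *
      (if i ≤ L then gbinom (m + k - i) (L - i) else 0)) = gbinom m L := by
  induction k with
  | zero => intro L m; simp [gbinom]
  | succ k ih =>
    intro L m
    match L with
    | 0 =>
      rw [Finset.sum_eq_single 0]
      · simp [gbinom_zero]
      · intro i _ hi
        rw [if_neg (by omega), mul_zero]
      · intro habs; exact absurd (Finset.mem_range.2 (by omega)) habs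
    | (L'' + 1) =>
      rw [Finset.sum_range_succ']
      have hsplit : ∀ i : ℕ, (-1:ℚ)^(i+1) * (((k+1).choose (i+1) : ℕ)) *
          (if i+1 ≤ L''+1 then gbinom (m + (k+1:ℕ) - (i+1:ℕ)) (L''+1 - (i+1)) else 0)
          = -((-1:ℚ)^i * (k.choose i) * (if i ≤ L'' then gbinom (m + k - i) (L'' - i) else 0))
            - ((-1:ℚ)^i * (k.choose (i+1)) * (if i+1 ≤ L''+1 then gbinom ((m+1) + k - ((i+1:ℕ):ℤ)) ((L''+1) - (i+1)) else 0)) := by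
        intro i
        rw [Nat.choose_succ_succ]
        have harg : m + ((k:ℕ)+1:ℕ) - ((i+1:ℕ):ℤ) = m + (k:ℤ) - i := by push_cast; ring
        have harg2 : (m+1) + (k:ℤ) - ((i+1:ℕ):ℤ) = m + (k:ℤ) - i := by push_cast; ring
        have hsub : L'' + 1 - (i+1) = L'' - i := by omega
        rw [harg, harg2, hsub]
        by_cases hiL : i ≤ L''
        · rw [if_pos (by omega), if_pos hiL]
          push_cast
          ring
        · rw [if_neg (by omega), if_neg hiL]
          push_cast
          ring
      rw [Finset.sum_congr rfl (fun i _ => hsplit i)]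
      rw [Finset.sum_sub_distrib, Finset.sum_neg_distrib, ih L'' m]
      have hB : ∑ i ∈ Finset.range (k+1), ((-1:ℚ)^i * (k.choose (i+1)) *
          (if i+1 ≤ L''+1 then gbinom ((m+1) + k - ((i+1:ℕ):ℤ)) ((L''+1) - (i+1)) else 0))
          = ((-1:ℚ)^0 * (k.choose 0) * (if 0 ≤ L''+1 then gbinom ((m+1) + k - ((0:ℕ):ℤ)) ((L''+1) - 0) else 0))
            - gbinom (m+1) (L''+1) := by
        have hext : ∑ i ∈ Finset.range (k+2), ((-1:ℚ)^i * (k.choose i) *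
            (if i ≤ L''+1 then gbinom ((m+1) + k - i) ((L''+1) - i) else 0)) = gbinom (m+1) (L''+1) := by
          rw [Finset.sum_range_succ, ← ih (L''+1) (m+1)]
          simp
        rw [Finset.sum_range_succ'] at hext
        have : ∀ i ∈ Finset.range (k+1), ((-1:ℚ)^(i+1) * (k.choose (i+1)) *
            (if i+1 ≤ L''+1 then gbinom ((m+1) + k - ((i+1:ℕ):ℤ)) ((L''+1) - (i+1)) else 0))
            = -((-1:ℚ)^i * (k.choose (i+1)) *
            (if i+1 ≤ L''+1 then gbinom ((m+1) + k - ((i+1:ℕ):ℤ)) ((L''+1) - (i+1)) else 0)) := by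
          intro i _; ring
        rw [Finset.sum_congr rfl this, Finset.sum_neg_distrib] at hext
        linarith [hext]
      rw [hB]
      have hp := gbinom_pascal m L''
      simp only [pow_zero, Nat.choose_zero_right, Nat.cast_one, Nat.cast_zero, one_mul,
        if_pos (Nat.zero_le _)]
      push_cast
      ring_nf
      ring_nf at hp
      linarith [hp]

lemma key2 (k L : ℕ) (m : ℤ) :
    ((-1:ℚ)^k * ((Nat.factorial k : ℚ))⁻¹) * ((-1:ℚ)^(m:ℤ) * gbinom m L)
      = ∑ i ∈ Finset.range (k+1), (if i ≤ L then
          ((Nat.factorial (k-i) : ℚ))⁻¹ * (((Nat.factorial i : ℚ))⁻¹ *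
            ((-1:ℚ)^(m + (k:ℤ) - (i:ℤ)) * gbinom (m + k - i) (L - i))) else 0) := by
  have hsign : ∀ i : ℕ, (-1:ℚ)^(m + (k:ℤ) - (i:ℤ)) = (-1:ℚ)^(m:ℤ) * ((-1:ℚ)^k * (-1:ℚ)^i) := by
    intro i
    rw [zpow_sub₀ (by norm_num : (-1:ℚ) ≠ 0), zpow_add₀ (by norm_num : (-1:ℚ) ≠ 0),
      zpow_natCast, zpow_natCast, div_eq_mul_inv,
      show ((-1:ℚ)^i)⁻¹ = (-1:ℚ)^i by rw [← inv_pow]; norm_num]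
    ring
  have hterm : ∀ i ∈ Finset.range (k+1),
      (if i ≤ L then ((Nat.factorial (k-i) : ℚ))⁻¹ * (((Nat.factorial i : ℚ))⁻¹ *
        ((-1:ℚ)^(m + (k:ℤ) - (i:ℤ)) * gbinom (m + k - i) (L - i))) else 0)
      = ((-1:ℚ)^(m:ℤ) * ((-1:ℚ)^k * ((Nat.factorial k : ℚ))⁻¹)) *
          ((-1:ℚ)^i * (k.choose i) * (if i ≤ L then gbinom (m + k - i) (L - i) else 0)) := by
    intro i hi
    have hik : i ≤ k := by have := Finset.mem_range.1 hi; omega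
    have hfk : ((Nat.factorial k : ℚ)) ≠ 0 := by exact_mod_cast (Nat.factorial_pos k).ne'
    have hfi : ((Nat.factorial i : ℚ)) ≠ 0 := by exact_mod_cast (Nat.factorial_pos i).ne'
    have hfki : ((Nat.factorial (k-i) : ℚ)) ≠ 0 := by exact_mod_cast (Nat.factorial_pos (k-i)).ne'
    have hch : ((k.choose i : ℕ) : ℚ) = (Nat.factorial k : ℚ) / ((Nat.factorial i : ℚ) * (Nat.factorial (k-i) : ℚ)) := by
      exact_mod_cast Nat.cast_choose ℚ hik
    by_cases hiL : i ≤ L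
    · rw [if_pos hiL, if_pos hiL, hsign i, hch]
      field_simp
    · rw [if_neg hiL, if_neg hiL]; ring
  rw [Finset.sum_congr rfl hterm, ← Finset.mul_sum, key k L m]
  ring

end AuxComb

section AuxDeriv
set_option linter.unusedSectionVars false

variable {R : Type} [CommRing R] [Algebra ℚ R] (d : R →+ R)

lemma d_one (hd : Leibniz d) : d (1 : R) = 0 := by
  have h1 := hd 1 1
  rw [one_mul, one_mul] at h1
  have h2 : d (1:R) + 0 = d 1 + d 1 := by rw [add_zero]; exact h1
  exact (add_left_cancel h2).symm

lemma iterD_add (t : ℕ) (a b : R) : d^[t] (a + b) = d^[t] a + d^[t] b := by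
  induction t with
  | zero => rfl
  | succ t ih =>
    rw [Function.iterate_succ_apply', Function.iterate_succ_apply',
      Function.iterate_succ_apply', ih, map_add]

lemma iterD_smul (t : ℕ) (c : ℚ) (a : R) : d^[t] (c • a) = c • d^[t] a := by
  induction t with
  | zero => rfl
  | succ t ih =>
    rw [Function.iterate_succ_apply', Function.iterate_succ_apply', ih, map_rat_smul]

lemma iterD_sum {ι : Type*} (t : ℕ) (s : Finset ι) (f : ι → R) :
    d^[t] (∑ i ∈ s, f i) = ∑ i ∈ s, d^[t] (f i) := by
  induction s using Finset.cons_induction with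
  | empty => rw [Finset.sum_empty, Finset.sum_empty, PDO.iterD_zero]
  | cons a s ha ih => rw [Finset.sum_cons, Finset.sum_cons, iterD_add, ih]

lemma d_npow (hd : Leibniz d) (u : R) (hu : d u = 0) : ∀ t : ℕ, d (u ^ t) = 0 := by
  intro t
  induction t with
  | zero => rw [pow_zero]; exact d_one d hd
  | succ t ih => rw [pow_succ, hd, ih, hu, mul_zero, mul_zero, add_zero]

lemma d_unit_inv (hd : Leibniz d) (u : Rˣ) (hu : d (u : R) = 0) :
    d ((u⁻¹ : Rˣ) : R) = 0 := by
  have h1 : ((u : R) * ((u⁻¹ : Rˣ) : R)) = 1 := by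
    rw [← Units.val_mul, mul_inv_cancel, Units.val_one]
  have h2 := hd (u : R) ((u⁻¹ : Rˣ) : R)
  rw [h1, d_one d hd, hu, mul_zero, add_zero] at h2
  calc d ((u⁻¹ : Rˣ) : R) = (((u⁻¹ : Rˣ) : R) * (u : R)) * d ((u⁻¹ : Rˣ) : R) := by
        rw [← Units.val_mul, inv_mul_cancel, Units.val_one, one_mul]
    _ = ((u⁻¹ : Rˣ) : R) * ((u : R) * d ((u⁻¹ : Rˣ) : R)) := by ring
    _ = 0 := by rw [← h2, mul_zero]

lemma d_hzpow (hd : Leibniz d) (h : Rˣ) (hdh : d (h : R) = 0) (m : ℤ) :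
    d ((h ^ m : Rˣ) : R) = 0 := by
  cases m with
  | ofNat t =>
    rw [Int.ofNat_eq_coe, zpow_natCast, Units.val_pow_eq_pow_val]
    exact d_npow d hd _ hdh t
  | negSucc t =>
    rw [zpow_negSucc]
    apply d_unit_inv d hd
    rw [Units.val_pow_eq_pow_val]
    exact d_npow d hd _ hdh (t+1)

lemma iterD_mul_right (hd : Leibniz d) (u : R) (hu : d u = 0) (t : ℕ) (a : R) :
    d^[t] (a * u) = d^[t] a * u := by
  induction t with
  | zero => rfl
  | succ t ih =>
    rw [Function.iterate_succ_apply', Function.iterate_succ_apply', ih, hd, hu, mul_zero,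
      zero_add, mul_comm]

end AuxDeriv

section AuxPDO

variable {R : Type} [CommRing R] [Algebra ℚ R] {d : R →+ R}

lemma coeff_smul (c : ℚ) (A : PDO R d) (n : ℤ) : (c • A).coeff n = c • A.coeff n := rfl

lemma coeff_mul (A B : PDO R d) (n : ℤ) :
    (A * B).coeff n = ∑ᶠ (k : ℤ) (m : ℤ),
      if _ : 0 ≤ k + m - n then
        A.coeff k * (gbinom k (k + m - n).toNat • (d^[(k + m - n).toNat] (B.coeff m)))
      else 0 := rfl

lemma coeff_adj (A : PDO R d) (n : ℤ) :
    (PDO.adj A).coeff n = ∑ᶠ k : ℤ,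
      if _ : 0 ≤ k - n then
        (((-1 : ℚ) ^ k) * gbinom k (k - n).toNat) • (d^[(k - n).toNat] (A.coeff k))
      else 0 := rfl

def coeffHom (n : ℤ) : PDO R d →+ R where
  toFun A := A.coeff n
  map_zero' := rfl
  map_add' _ _ := rfl

lemma coeff_sum {ι : Type*} (s : Finset ι) (f : ι → PDO R d) (n : ℤ) :
    (∑ i ∈ s, f i).coeff n = ∑ i ∈ s, (f i).coeff n :=
  map_sum (coeffHom n) f s

lemma coeff_mul_single (A B : PDO R d) (K n : ℤ)
    (hB : ∀ m, m ≠ K → B.coeff m = 0)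
    (hK : ∀ t : ℕ, d^[t+1] (B.coeff K) = 0) :
    (A * B).coeff n = A.coeff (n - K) * B.coeff K := by
  rw [coeff_mul]
  have hinner : ∀ k : ℤ, (∑ᶠ m : ℤ, if _ : 0 ≤ k + m - n then
        A.coeff k * (gbinom k (k + m - n).toNat • (d^[(k + m - n).toNat] (B.coeff m)))
      else 0)
      = if _ : 0 ≤ k + K - n then
        A.coeff k * (gbinom k (k + K - n).toNat • (d^[(k + K - n).toNat] (B.coeff K)))
      else 0 := by
    intro k
    apply finsum_eq_single
    intro m hm
    by_cases hc : 0 ≤ k + m - n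
    · rw [dif_pos hc, hB m hm, PDO.iterD_zero, smul_zero, mul_zero]
    · rw [dif_neg hc]
  rw [finsum_congr hinner, finsum_eq_single _ (n - K) ?_]
  · rw [dif_pos (by omega : (0:ℤ) ≤ (n - K) + K - n)]
    have h0 : ((n - K) + K - n).toNat = 0 := by omega
    rw [h0, gbinom_zero, one_smul, Function.iterate_zero_apply]
  · intro k hk
    by_cases hc : 0 ≤ k + K - n
    · obtain ⟨t, ht⟩ := Nat.exists_eq_succ_of_ne_zero (show (k + K - n).toNat ≠ 0 by omega)
      rw [dif_pos hc, ht, hK t, smul_zero, mul_zero]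
    · rw [dif_neg hc]

lemma coeff_pow_del (hd1 : d (1:R) = 0) (K : ℕ) (n : ℤ) :
    ((PDO.del : PDO R d) ^ K).coeff n = if n = (K : ℤ) then 1 else 0 := by
  induction K generalizing n with
  | zero =>
    show (if n = 0 then (1:R) else 0) = if n = ((0:ℕ) : ℤ) then 1 else 0
    norm_num
  | succ K ih =>
    have hpow : (PDO.del : PDO R d) ^ (K+1) = (PDO.del : PDO R d) ^ K * PDO.del := rfl
    rw [hpow, coeff_mul_single _ _ 1 n ?_ ?_, ih]
    · show (if n - 1 = (K:ℤ) then (1:R) else 0) * (if (1:ℤ) = 1 then (1:R) else 0) = _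
      rw [if_pos rfl, mul_one]
      by_cases hn : n = ((K+1 : ℕ) : ℤ)
      · rw [if_pos hn, if_pos (by omega)]
      · rw [if_neg hn, if_neg (by omega)]
    · intro m hm
      show (if m = 1 then (1:R) else 0) = 0
      rw [if_neg hm]
    · intro t
      show d^[t+1] (if (1:ℤ) = 1 then (1:R) else 0) = 0
      rw [if_pos rfl, Function.iterate_succ_apply, hd1, PDO.iterD_zero]

lemma coeff_mul_smul_delpow (hd1 : d (1:R) = 0) (A : PDO R d) (c : ℚ) (K : ℕ) (n : ℤ) :
    (A * (c • (PDO.del : PDO R d) ^ K)).coeff n = c • A.coeff (n - K) := by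
  rw [coeff_mul_single A _ (K : ℤ) n ?_ ?_]
  · rw [coeff_smul, coeff_pow_del hd1, if_pos rfl, mul_smul_comm, mul_one]
  · intro m hm
    rw [coeff_smul, coeff_pow_del hd1, if_neg hm, smul_zero]
  · intro t
    rw [coeff_smul, coeff_pow_del hd1, if_pos rfl, iterD_smul,
      Function.iterate_succ_apply, hd1, PDO.iterD_zero, smul_zero]

end AuxPDO

/-- `Q(h∂)* · e^(−y∂) = (Q^y(h∂) · e^(y∂))*` in `Ψ(R)[[y]]`, stated as an equality of the
coefficients of each power `yᵏ`. -/
theorem adjoint_exponential_shift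
    (R : Type) [CommRing R] [Algebra ℚ R] (d : R →+ R)
    (hd : Leibniz d) (h : Rˣ) (hdh : d (h : R) = 0)
    (Q : PDO R d) :
    ∀ k : ℕ,
      PDO.adj (PDO.ofSymbol h Q) * ((((-1 : ℚ) ^ k) * ((Nat.factorial k : ℚ))⁻¹) • PDO.del ^ k)
        = PDO.adj (∑ i ∈ Finset.range (k + 1),
            (((Nat.factorial i : ℚ))⁻¹ • PDO.ofSymbol h (PDO.mapD i Q))
              * (((Nat.factorial (k - i) : ℚ))⁻¹ • PDO.del ^ (k - i))) := by
  intro k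
  classical
  have hd1 : d (1 : R) = 0 := d_one d hd
  obtain ⟨N, hN⟩ := Q.bdd
  apply PDO.ext'
  funext n
  set c : ℚ := ((-1 : ℚ) ^ k) * ((Nat.factorial k : ℚ))⁻¹ with hc_def
  -- the two families of terms
  set F : ℤ → R := fun j =>
    if 0 ≤ j - (n - (k:ℤ)) then
      (((-1:ℚ) ^ (j:ℤ)) * gbinom j (j - (n - (k:ℤ))).toNat) •
        (d^[(j - (n - (k:ℤ))).toNat] (Q.coeff j) * ((h ^ j : Rˣ) : R))
    else 0 with hF_def
  set G : ℤ → ℕ → R := fun j i =>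
    if 0 ≤ j - n then
      ((((Nat.factorial (k-i) : ℚ))⁻¹) * (((Nat.factorial i : ℚ))⁻¹ *
        (((-1:ℚ) ^ (j:ℤ)) * gbinom j (j - n).toNat))) •
        (d^[(j - n).toNat + i] (Q.coeff (j - ((k - i : ℕ) : ℤ))) * ((h ^ (j - ((k - i : ℕ) : ℤ)) : Rˣ) : R))
    else 0 with hG_def
  -- LHS
  have hL1 : (PDO.adj (PDO.ofSymbol h Q) * (c • PDO.del ^ k)).coeff n
      = c • (PDO.adj (PDO.ofSymbol h Q)).coeff (n - k) :=
    coeff_mul_smul_delpow hd1 _ c k n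
  have hL2 : (PDO.adj (PDO.ofSymbol h Q)).coeff (n - k) = ∑ᶠ j : ℤ, F j := by
    rw [coeff_adj]
    apply finsum_congr
    intro j
    by_cases hcond : 0 ≤ j - (n - (k:ℤ))
    · rw [dif_pos hcond, hF_def]
      simp only [if_pos hcond]
      have : (PDO.ofSymbol h Q).coeff j = Q.coeff j * ((h ^ j : Rˣ) : R) := rfl
      rw [this, iterD_mul_right d hd _ (d_hzpow d hd h hdh j)]
    · rw [dif_neg hcond, hF_def]
      simp only [if_neg hcond]
  -- coefficients of the sum S
  have hS : ∀ j : ℤ, (∑ i ∈ Finset.range (k + 1),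
        (((Nat.factorial i : ℚ))⁻¹ • PDO.ofSymbol h (PDO.mapD i Q))
          * (((Nat.factorial (k - i) : ℚ))⁻¹ • PDO.del ^ (k - i))).coeff j
      = ∑ i ∈ Finset.range (k + 1), ((Nat.factorial (k-i) : ℚ))⁻¹ •
          (((Nat.factorial i : ℚ))⁻¹ •
            (d^[i] (Q.coeff (j - ((k - i : ℕ) : ℤ))) * ((h ^ (j - ((k - i : ℕ) : ℤ)) : Rˣ) : R))) := by
    intro j
    rw [coeff_sum]
    apply Finset.sum_congr rfl
    intro i _
    rw [coeff_mul_smul_delpow hd1]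
    rfl
  -- RHS as a double sum
  have hR1 : (PDO.adj (∑ i ∈ Finset.range (k + 1),
        (((Nat.factorial i : ℚ))⁻¹ • PDO.ofSymbol h (PDO.mapD i Q))
          * (((Nat.factorial (k - i) : ℚ))⁻¹ • PDO.del ^ (k - i)))).coeff n
      = ∑ᶠ j : ℤ, ∑ i ∈ Finset.range (k + 1), G j i := by
    rw [coeff_adj]
    apply finsum_congr
    intro j
    by_cases hcond : 0 ≤ j - n
    · rw [dif_pos hcond, hS j, iterD_sum, Finset.smul_sum]
      apply Finset.sum_congr rfl
      intro i _
      rw [hG_def]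
      simp only [if_pos hcond]
      rw [iterD_smul, iterD_smul, iterD_mul_right d hd _ (d_hzpow d hd h hdh _),
        ← Function.iterate_add_apply, smul_smul, smul_smul]
      congr 1
      ring
    · rw [dif_neg hcond]
      symm
      apply Finset.sum_eq_zero
      intro i _
      rw [hG_def]
      simp only [if_neg hcond]
  -- support finiteness
  have hGzero : ∀ (i : ℕ) (j : ℤ), j < n ∨ N + (k:ℤ) < j → G j i = 0 := by
    intro i j hj
    rw [hG_def]
    rcases hj with hj | hj
    · simp only [if_neg (show ¬ (0:ℤ) ≤ j - n by omega)]
    · have hQ : Q.coeff (j - ((k - i : ℕ) : ℤ)) = 0 := hN _ (by omega)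
      simp only [hQ, PDO.iterD_zero, zero_mul, smul_zero, if_pos, ite_self]
  have hGfin : ∀ i ∈ Finset.range (k+1), (Function.support (fun j : ℤ => G j i)).Finite := by
    intro i _
    apply Set.Finite.subset (Set.finite_Icc n (N + (k:ℤ)))
    intro j hj
    rw [Set.mem_Icc]
    by_contra hcon
    exact hj (hGzero i j (by omega))
  have hGfin2 : ∀ i ∈ Finset.range (k+1),
      (Function.support (fun m : ℤ => G (m + ((k - i : ℕ) : ℤ)) i)).Finite := by
    intro i _
    apply Set.Finite.subset (Set.finite_Icc (n - (k:ℤ)) (N + (k:ℤ)))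
    intro m hm
    rw [Set.mem_Icc]
    by_contra hcon
    exact hm (hGzero i _ (by omega))
  have hFfin : (Function.support F).Finite := by
    apply Set.Finite.subset (Set.finite_Icc (n - (k:ℤ)) N)
    intro j hj
    rw [Set.mem_Icc]
    by_contra hcon
    apply hj
    rw [hF_def]
    rcases (by omega : j < n - (k:ℤ) ∨ N < j) with hj2 | hj2
    · simp only [if_neg (show ¬ (0:ℤ) ≤ j - (n - (k:ℤ)) by omega)]
    · simp only [hN j hj2, PDO.iterD_zero, zero_mul, smul_zero, ite_self]
  -- reindex the double sum
  have hre : ∀ i ∈ Finset.range (k+1),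
      (∑ᶠ j : ℤ, G j i) = ∑ᶠ m : ℤ, G (m + ((k - i : ℕ) : ℤ)) i := by
    intro i _
    exact (finsum_comp_equiv (Equiv.addRight ((k - i : ℕ) : ℤ))).symm
  -- the pointwise identity
  have hmain : ∀ m : ℤ, c • F m = ∑ i ∈ Finset.range (k+1), G (m + ((k - i : ℕ) : ℤ)) i := by
    intro m
    by_cases hcond : 0 ≤ m + (k:ℤ) - n
    · set L : ℕ := (m + (k:ℤ) - n).toNat with hL_def
      have hterm : ∀ i ∈ Finset.range (k+1), G (m + ((k - i : ℕ) : ℤ)) i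
          = (if i ≤ L then
              ((Nat.factorial (k-i) : ℚ))⁻¹ * (((Nat.factorial i : ℚ))⁻¹ *
                (((-1:ℚ) ^ (m + (k:ℤ) - (i:ℤ))) * gbinom (m + (k:ℤ) - (i:ℤ)) (L - i)))
            else 0) • (d^[L] (Q.coeff m) * ((h ^ m : Rˣ) : R)) := by
        intro i hi
        have hik : i ≤ k := by have := Finset.mem_range.1 hi; omega
        have hcast : ((k - i : ℕ) : ℤ) = (k:ℤ) - (i:ℤ) := by omega
        have harg : m + ((k - i : ℕ) : ℤ) - ((k - i : ℕ) : ℤ) = m := by ring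
        rw [hG_def]
        by_cases hiL : i ≤ L
        · have hcond2 : (0:ℤ) ≤ m + ((k - i : ℕ) : ℤ) - n := by omega
          simp only [if_pos hcond2]
          rw [if_pos hiL, harg]
          have hexp : (m + ((k - i : ℕ) : ℤ) - n).toNat + i = L := by omega
          have hargj : m + ((k - i : ℕ) : ℤ) = m + (k:ℤ) - (i:ℤ) := by omega
          have htn : (m + ((k - i : ℕ) : ℤ) - n).toNat = L - i := by omega
          rw [hexp, htn, hargj]
        · have hcond2 : ¬ (0:ℤ) ≤ m + ((k - i : ℕ) : ℤ) - n := by omega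
          simp only [if_neg hcond2]
          rw [if_neg hiL, zero_smul]
      rw [Finset.sum_congr rfl hterm, ← Finset.sum_smul, ← key2 k L m]
      rw [hF_def]
      simp only [if_pos (show (0:ℤ) ≤ m - (n - (k:ℤ)) by omega)]
      have htn2 : (m - (n - (k:ℤ))).toNat = L := by omega
      rw [htn2, smul_smul]
    · rw [hF_def]
      simp only [if_neg (show ¬ (0:ℤ) ≤ m - (n - (k:ℤ)) by omega), smul_zero]
      symm
      apply Finset.sum_eq_zero
      intro i hi
      have hik : i ≤ k := by have := Finset.mem_range.1 hi; omega
      rw [hG_def]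
      simp only [if_neg (show ¬ (0:ℤ) ≤ m + ((k - i : ℕ) : ℤ) - n by omega)]
  -- put everything together
  rw [hL1, hL2, hR1, finsum_sum_comm _ _ hGfin, Finset.sum_congr rfl hre,
    ← finsum_sum_comm _ _ hGfin2, smul_finsum' c hFfin]
  exact finsum_congr hmain
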